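/- arXiv:2105.09677 — 2 statements merged into one kernel-verified Lean document; each statement's English description precedes it below -/
import Mathlib

section
/- Let (E,ℰ) be a measurable space and let (P_μ)_{μ∈𝒫(E)} be a nonlinear Markov chain whose two-step kernel Q satisfies conditions (C1) and (C2) with λ₂ = α₂. Then for all μ, ν ∈ 𝒫(E), writing p = ‖μ − ν‖_TV/2, one has ‖μQ_μ − νQ_ν‖_TV ≤ 2p(1 − λ₂ p). -/
open MeasureTheory ProbabilityTheory

/-- Total variation distance `‖μ − ν‖_TV = 2 sup_{A ∈ ℰ} |μ(A) − ν(A)|`. -/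
noncomputable def tvDist {E : Type*} [MeasurableSpace E] (μ ν : Measure E) : ℝ :=
  2 * ⨆ A : {s : Set E // MeasurableSet s}, |(μ A).toReal - (ν A).toReal|

/-- One step of the nonlinear chain: `μ ↦ μ P_μ`, `(νP_μ)(B) = ∫ P_μ(x,B) ν(dx)`. -/
noncomputable def stepMeasure {E : Type*} [MeasurableSpace E]
    (P : Measure E → Kernel E E) (μ : Measure E) : Measure E :=
  μ.bind (fun x => P μ x)

/-- Two-step transition kernel `Q_μ(x,B) = ∫ P_μ(x,dy) P_{μP_μ}(y,B)`. -/
noncomputable def twoStepKernel {E : Type*} [MeasurableSpace E]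
    (P : Measure E → Kernel E E) (μ : Measure E) (x : E) : Measure E :=
  (P μ x).bind (fun y => P (stepMeasure P μ) y)

/-- Marginal distributions `μ_{n+1} = μ_n P_{μ_n}` of the nonlinear Markov chain. -/
noncomputable def marginal {E : Type*} [MeasurableSpace E]
    (P : Measure E → Kernel E E) (μ0 : Measure E) : ℕ → Measure E
  | 0 => μ0
  | n + 1 => stepMeasure P (marginal P μ0 n)

section aux
variable {E : Type*} [MeasurableSpace E]

lemma meas_toReal_le_one (μ : Measure E) [IsProbabilityMeasure μ] (A : Set E) :
    (μ A).toReal ≤ 1 := by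
  simpa using ENNReal.toReal_mono ENNReal.one_ne_top (prob_le_one (μ := μ) (s := A))

lemma tv_bdd (μ ν : Measure E) [IsProbabilityMeasure μ] [IsProbabilityMeasure ν] :
    BddAbove (Set.range fun A : {s : Set E // MeasurableSet s} =>
      |(μ A).toReal - (ν A).toReal|) := by
  refine ⟨2, ?_⟩
  rintro x ⟨A, rfl⟩
  have h1 := meas_toReal_le_one μ A
  have h2 := meas_toReal_le_one ν A
  have h3 : (0:ℝ) ≤ (μ (A:Set E)).toReal := ENNReal.toReal_nonneg
  have h4 : (0:ℝ) ≤ (ν (A:Set E)).toReal := ENNReal.toReal_nonneg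
  rw [abs_le]; constructor <;> linarith

lemma abs_le_half_tv (μ ν : Measure E) [IsProbabilityMeasure μ] [IsProbabilityMeasure ν]
    {A : Set E} (hA : MeasurableSet A) :
    |(μ A).toReal - (ν A).toReal| ≤ tvDist μ ν / 2 := by
  have h := le_ciSup (tv_bdd μ ν) (⟨A, hA⟩ : {s : Set E // MeasurableSet s})
  unfold tvDist; linarith

lemma bind_toReal (K : Kernel E E) [IsMarkovKernel K] (m : Measure E)
    {A : Set E} (hA : MeasurableSet A) :
    ((m.bind fun x => K x) A).toReal = ∫ x, (K x A).toReal ∂m := by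
  rw [Measure.bind_apply hA K.measurable.aemeasurable,
    ← integral_toReal ((K.measurable_coe hA).aemeasurable)
      (ae_of_all _ fun x => measure_lt_top (K x) A)]

lemma int_f (K : Kernel E E) [IsMarkovKernel K] (m : Measure E) [IsFiniteMeasure m]
    {A : Set E} (hA : MeasurableSet A) :
    Integrable (fun x => (K x A).toReal) m := by
  refine Integrable.mono' (integrable_const 1)
    ((K.measurable_coe hA).ennreal_toReal).aestronglyMeasurable (ae_of_all _ fun x => ?_)
  rw [Real.norm_eq_abs, abs_of_nonneg ENNReal.toReal_nonneg]
  exact meas_toReal_le_one (K x) A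

end aux


/-- under (C1) and (C2) with `λ₂ = α₂`, writing `p = ‖μ − ν‖_TV / 2`,
`‖μQ_μ − νQ_ν‖_TV ≤ 2p(1 − λ₂ p)`. -/
theorem two_step_contraction_critical
    {E : Type*} [MeasurableSpace E]
    (P : Measure E → Kernel E E) (hP : ∀ μ, IsMarkovKernel (P μ))
    (α₂ lam₂ : ℝ) (hα₂0 : 0 < α₂) (hα₂1 : α₂ < 1)
    (hlam₂0 : 0 ≤ lam₂) (hlam₂α : lam₂ ≤ α₂) (hcrit : lam₂ = α₂)
    (C1 : ∀ (μ ν : Measure E), IsProbabilityMeasure μ → IsProbabilityMeasure ν →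
      ∀ x y : E, tvDist (twoStepKernel P μ x) (twoStepKernel P ν y) ≤ 2 * (1 - α₂))
    (C2 : ∀ (μ ν : Measure E), IsProbabilityMeasure μ → IsProbabilityMeasure ν →
      ∀ x : E, tvDist (twoStepKernel P μ x) (twoStepKernel P ν x) ≤ lam₂ * tvDist μ ν)
    (μ ν : Measure E) (hμ : IsProbabilityMeasure μ) (hν : IsProbabilityMeasure ν) :
    tvDist (μ.bind (twoStepKernel P μ)) (ν.bind (twoStepKernel P ν)) ≤
      2 * (tvDist μ ν / 2) * (1 - lam₂ * (tvDist μ ν / 2)) := by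
  haveI := hμ; haveI := hν
  set p : ℝ := tvDist μ ν / 2 with hpdef
  set Kμ : Kernel E E := (P (stepMeasure P μ)) ∘ₖ (P μ) with hKμ
  set Kν : Kernel E E := (P (stepMeasure P ν)) ∘ₖ (P ν) with hKν
  haveI := hP μ; haveI := hP ν
  haveI := hP (stepMeasure P μ); haveI := hP (stepMeasure P ν)
  have hQμ : twoStepKernel P μ = fun x => Kμ x := by
    funext x; exact (Kernel.comp_apply _ _ x).symm
  have hQν : twoStepKernel P ν = fun x => Kν x := by
    funext x; exact (Kernel.comp_apply _ _ x).symm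
  haveI : IsMarkovKernel Kμ := by infer_instance
  haveI : IsMarkovKernel Kν := by infer_instance
  have hPKμ : ∀ x, IsProbabilityMeasure (twoStepKernel P μ x) := by
    intro x; rw [hQμ]; infer_instance
  have hPKν : ∀ x, IsProbabilityMeasure (twoStepKernel P ν x) := by
    intro x; rw [hQν]; infer_instance
  have hE : Nonempty E := by
    by_contra h
    rw [not_nonempty_iff] at h
    have h0 : μ Set.univ = 0 := by
      rw [Set.univ_eq_empty_iff.2 h]; simp
    rw [measure_univ] at h0; simp at h0
  -- Hahn decomposition
  obtain ⟨S, hS, hS1, hS2⟩ := hahn_decomposition (μ := μ) (ν := ν)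
  have hle1 : ν.restrict S ≤ μ.restrict S := by
    rw [Measure.le_iff]
    intro A hA
    rw [Measure.restrict_apply hA, Measure.restrict_apply hA]
    exact hS1 _ (hA.inter hS) Set.inter_subset_right
  have hle2 : μ.restrict Sᶜ ≤ ν.restrict Sᶜ := by
    rw [Measure.le_iff]
    intro A hA
    rw [Measure.restrict_apply hA, Measure.restrict_apply hA]
    exact hS2 _ (hA.inter hS.compl) Set.inter_subset_right
  set ρ : Measure E := ν.restrict S + μ.restrict Sᶜ with hρdef
  set ξ : Measure E := μ.restrict S - ν.restrict S with hξdef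
  set η : Measure E := ν.restrict Sᶜ - μ.restrict Sᶜ with hηdef
  haveI : IsFiniteMeasure ρ := by rw [hρdef]; infer_instance
  haveI : IsFiniteMeasure ξ := by rw [hξdef]; infer_instance
  haveI : IsFiniteMeasure η := by rw [hηdef]; infer_instance
  have hμdec : μ = ξ + ρ := by
    have h1 : ξ + ν.restrict S = μ.restrict S := Measure.sub_add_cancel_of_le hle1
    calc μ = μ.restrict S + μ.restrict Sᶜ := (Measure.restrict_add_restrict_compl hS).symm
    _ = (ξ + ν.restrict S) + μ.restrict Sᶜ := by rw [h1]
    _ = ξ + ρ := by rw [hρdef, add_assoc]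
  have hνdec : ν = η + ρ := by
    have h1 : η + μ.restrict Sᶜ = ν.restrict Sᶜ := Measure.sub_add_cancel_of_le hle2
    calc ν = ν.restrict Sᶜ + ν.restrict S := by
          rw [add_comm]; exact (Measure.restrict_add_restrict_compl hS).symm
    _ = (η + μ.restrict Sᶜ) + ν.restrict S := by rw [h1]
    _ = η + ρ := by rw [hρdef, add_assoc, add_comm (μ.restrict Sᶜ) (ν.restrict S)]
  -- splitting evaluations
  have hsplitμ : ∀ A : Set E, (μ A).toReal = (ξ A).toReal + (ρ A).toReal := by
    intro A
    rw [hμdec, Measure.add_apply, ENNReal.toReal_add (measure_ne_top _ _) (measure_ne_top _ _)]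
  have hsplitν : ∀ A : Set E, (ν A).toReal = (η A).toReal + (ρ A).toReal := by
    intro A
    rw [hνdec, Measure.add_apply, ENNReal.toReal_add (measure_ne_top _ _) (measure_ne_top _ _)]
  set q : ℝ := (ξ Set.univ).toReal with hqdef
  have hηq : (η Set.univ).toReal = q := by
    have h1 := hsplitμ Set.univ
    have h2 := hsplitν Set.univ
    rw [measure_univ] at h1 h2
    simp only [ENNReal.toReal_one] at h1 h2
    linarith
  have hρq : (ρ Set.univ).toReal = 1 - q := by
    have h1 := hsplitμ Set.univ
    rw [measure_univ] at h1
    simp only [ENNReal.toReal_one] at h1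
    linarith
  have hq0 : 0 ≤ q := ENNReal.toReal_nonneg
  have hq1 : q ≤ 1 := by
    have := ENNReal.toReal_nonneg (a := ρ Set.univ); linarith
  have hξbd : ∀ A : Set E, (ξ A).toReal ≤ q :=
    fun A => ENNReal.toReal_mono (measure_ne_top _ _) (measure_mono (Set.subset_univ A))
  have hηbd : ∀ A : Set E, (η A).toReal ≤ q := by
    intro A
    rw [← hηq]
    exact ENNReal.toReal_mono (measure_ne_top _ _) (measure_mono (Set.subset_univ A))
  -- identify q with p = tvDist μ ν / 2
  have hpq : p = q := by
    have hle : p ≤ q := by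
      have hsup : (⨆ A : {s : Set E // MeasurableSet s}, |(μ A).toReal - (ν A).toReal|) ≤ q := by
        refine ciSup_le fun A => ?_
        rw [hsplitμ A, hsplitν A, abs_le]
        have h1 := ENNReal.toReal_nonneg (a := ξ (A : Set E))
        have h2 := ENNReal.toReal_nonneg (a := η (A : Set E))
        have h3 := hξbd (A : Set E)
        have h4 := hηbd (A : Set E)
        constructor <;> linarith
      rw [hpdef]; unfold tvDist; linarith
    have hge : q ≤ p := by
      have hηS : (η S).toReal = 0 := by
        have h1 : η S ≤ (ν.restrict Sᶜ) S := Measure.le_iff'.mp Measure.sub_le S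
        have h2 : (ν.restrict Sᶜ) S = 0 := by
          rw [Measure.restrict_apply hS]; simp
        have h3 : η S = 0 := le_antisymm (h2 ▸ h1) zero_le
        rw [h3]; simp
      have hξS : (ξ S).toReal = q := by
        have h1 : ξ Sᶜ = 0 := by
          have h1' : ξ Sᶜ ≤ (μ.restrict S) Sᶜ := Measure.le_iff'.mp Measure.sub_le Sᶜ
          have h2 : (μ.restrict S) Sᶜ = 0 := by
            rw [Measure.restrict_apply hS.compl]; simp
          exact le_antisymm (h2 ▸ h1') zero_le
        rw [hqdef, ← measure_add_measure_compl hS, h1, add_zero]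
      have h := abs_le_half_tv μ ν hS
      rw [hsplitμ S, hsplitν S, hξS, hηS] at h
      have he : q + (ρ S).toReal - (0 + (ρ S).toReal) = q := by ring
      rw [he, abs_of_nonneg hq0] at h
      rw [hpdef]; exact h
    linarith
  set c : ℝ := 1 - α₂ with hcdef
  -- main per-set estimate
  have key : ∀ A : Set E, MeasurableSet A →
      |((μ.bind (twoStepKernel P μ)) A).toReal - ((ν.bind (twoStepKernel P ν)) A).toReal|
        ≤ p * (1 - lam₂ * p) := by
    intro A hA
    have hbμ : ((μ.bind (twoStepKernel P μ)) A).toReal = ∫ x, (Kμ x A).toReal ∂μ := by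
      rw [hQμ]; exact bind_toReal Kμ μ hA
    have hbν : ((ν.bind (twoStepKernel P ν)) A).toReal = ∫ x, (Kν x A).toReal ∂ν := by
      rw [hQν]; exact bind_toReal Kν ν hA
    set f : E → ℝ := fun x => (Kμ x A).toReal with hf
    set g : E → ℝ := fun x => (Kν x A).toReal with hg
    have hintf : ∀ (m : Measure E) [IsFiniteMeasure m], Integrable f m :=
      fun m _ => int_f Kμ m hA
    have hintg : ∀ (m : Measure E) [IsFiniteMeasure m], Integrable g m :=
      fun m _ => int_f Kν m hA
    have hsplitIμ : ∫ x, f x ∂μ = ∫ x, f x ∂ξ + ∫ x, f x ∂ρ := by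
      rw [hμdec]; exact integral_add_measure (hintf ξ) (hintf ρ)
    have hsplitIν : ∫ x, g x ∂ν = ∫ x, g x ∂η + ∫ x, g x ∂ρ := by
      rw [hνdec]; exact integral_add_measure (hintg η) (hintg ρ)
    -- pointwise bounds
    have hC2' : ∀ x, |f x - g x| ≤ lam₂ * p := by
      intro x
      haveI := hPKμ x; haveI := hPKν x
      have h1 := abs_le_half_tv (twoStepKernel P μ x) (twoStepKernel P ν x) hA
      have h2 := C2 μ ν hμ hν x
      have e1 : twoStepKernel P μ x = Kμ x := by rw [hQμ]
      have e2 : twoStepKernel P ν x = Kν x := by rw [hQν]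
      rw [e1, e2] at h1 h2
      have e3 : lam₂ * p = lam₂ * tvDist μ ν / 2 := by rw [hpdef]; ring
      simp only [hf, hg]
      linarith
    have hC1' : ∀ x y, |f x - g y| ≤ c := by
      intro x y
      haveI := hPKμ x; haveI := hPKν y
      have h1 := abs_le_half_tv (twoStepKernel P μ x) (twoStepKernel P ν y) hA
      have h2 := C1 μ ν hμ hν x y
      have e1 : twoStepKernel P μ x = Kμ x := by rw [hQμ]
      have e2 : twoStepKernel P ν y = Kν y := by rw [hQν]
      rw [e1, e2] at h1 h2
      simp only [hf, hg]
      rw [hcdef]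
      linarith
    -- bound on ρ part
    have hρbound : |∫ x, f x ∂ρ - ∫ x, g x ∂ρ| ≤ lam₂ * p * (1 - q) := by
      rw [← integral_sub (hintf ρ) (hintg ρ)]
      have h := norm_integral_le_of_norm_le_const (μ := ρ) (f := fun x => f x - g x)
        (C := lam₂ * p) (ae_of_all _ fun x => by rw [Real.norm_eq_abs]; exact hC2' x)
      rw [Real.norm_eq_abs, measureReal_def, hρq] at h
      exact h
    -- bound on singular part
    have hbddg : BddBelow (Set.range g) := ⟨0, by rintro y ⟨x, rfl⟩; exact ENNReal.toReal_nonneg⟩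
    have hbddf : BddBelow (Set.range f) := ⟨0, by rintro y ⟨x, rfl⟩; exact ENNReal.toReal_nonneg⟩
    set If : ℝ := ⨅ x, f x with hIf
    set Ig : ℝ := ⨅ x, g x with hIg
    have hfub : ∀ x, f x ≤ Ig + c := by
      intro x
      have h1 : ∀ y, f x - c ≤ g y := by
        intro y; have := hC1' x y; rw [abs_le] at this; linarith [this.2]
      have h2 := le_ciInf h1
      rw [← hIg] at h2; linarith
    have hgub : ∀ y, g y ≤ If + c := by
      intro y
      have h1 : ∀ x, g y - c ≤ f x := by
        intro x; have := hC1' x y; rw [abs_le] at this; linarith [this.1]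
      have h2 := le_ciInf h1
      rw [← hIf] at h2; linarith
    have h1 : ∫ x, f x ∂ξ ≤ (Ig + c) * q := by
      calc ∫ x, f x ∂ξ ≤ ∫ _, (Ig + c) ∂ξ :=
            integral_mono (hintf ξ) (integrable_const _) hfub
      _ = (Ig + c) * q := by rw [integral_const, smul_eq_mul, measureReal_def, ← hqdef]; ring
    have h2 : Ig * q ≤ ∫ y, g y ∂η := by
      calc Ig * q = ∫ _, Ig ∂η := by rw [integral_const, smul_eq_mul, measureReal_def, hηq]; ring
      _ ≤ ∫ y, g y ∂η :=
            integral_mono (integrable_const _) (hintg η) (fun y => ciInf_le hbddg y)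
    have h3 : ∫ y, g y ∂η ≤ (If + c) * q := by
      calc ∫ y, g y ∂η ≤ ∫ _, (If + c) ∂η :=
            integral_mono (hintg η) (integrable_const _) hgub
      _ = (If + c) * q := by rw [integral_const, smul_eq_mul, measureReal_def, hηq]; ring
    have h4 : If * q ≤ ∫ x, f x ∂ξ := by
      calc If * q = ∫ _, If ∂ξ := by rw [integral_const, smul_eq_mul, measureReal_def, ← hqdef]; ring
      _ ≤ ∫ x, f x ∂ξ :=
            integral_mono (integrable_const _) (hintf ξ) (fun x => ciInf_le hbddf x)
    have hsing : |∫ x, f x ∂ξ - ∫ y, g y ∂η| ≤ c * q := by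
      have e1 : (Ig + c) * q = Ig * q + c * q := by ring
      have e2 : (If + c) * q = If * q + c * q := by ring
      rw [abs_le]; constructor <;> linarith
    -- combine
    rw [hbμ, hbν, hsplitIμ, hsplitIν]
    have habs : |(∫ x, f x ∂ξ + ∫ x, f x ∂ρ) - (∫ y, g y ∂η + ∫ x, g x ∂ρ)|
        ≤ c * q + lam₂ * p * (1 - q) := by
      have := abs_sub (∫ x, f x ∂ξ - ∫ y, g y ∂η) (∫ x, g x ∂ρ - ∫ x, f x ∂ρ)
      have e : (∫ x, f x ∂ξ + ∫ x, f x ∂ρ) - (∫ y, g y ∂η + ∫ x, g x ∂ρ)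
          = (∫ x, f x ∂ξ - ∫ y, g y ∂η) - (∫ x, g x ∂ρ - ∫ x, f x ∂ρ) := by ring
      rw [e]
      have h5 : |∫ x, g x ∂ρ - ∫ x, f x ∂ρ| ≤ lam₂ * p * (1 - q) := by
        rw [abs_sub_comm]; exact hρbound
      calc |(∫ x, f x ∂ξ - ∫ y, g y ∂η) - (∫ x, g x ∂ρ - ∫ x, f x ∂ρ)|
          ≤ |∫ x, f x ∂ξ - ∫ y, g y ∂η| + |∫ x, g x ∂ρ - ∫ x, f x ∂ρ| := abs_sub _ _
      _ ≤ c * q + lam₂ * p * (1 - q) := add_le_add hsing h5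
    have efin : c * q + lam₂ * p * (1 - q) = p * (1 - lam₂ * p) := by
      rw [hcdef, ← hcrit, hpq]; ring
    rw [efin] at habs
    exact habs
  -- conclude
  have hfinal : (⨆ A : {s : Set E // MeasurableSet s},
      |((μ.bind (twoStepKernel P μ)) A).toReal - ((ν.bind (twoStepKernel P ν)) A).toReal|)
        ≤ p * (1 - lam₂ * p) :=
    ciSup_le fun A => key A A.2
  show tvDist (μ.bind (twoStepKernel P μ)) (ν.bind (twoStepKernel P ν)) ≤ 2 * p * (1 - lam₂ * p)
  unfold tvDist
  linarith
end

section
/- Let (E,ℰ) be a measurable space and let (P_μ)_{μ∈𝒫(E)} be a nonlinear Markov chain satisfying conditions (C1), (C2) and (C3). Then for every initial distribution μ₀ ∈ 𝒫(E), the sequence of marginal distributions (μ_n)_{n∈ℕ} is a Cauchy sequence in the complete metric space (𝒫(E), ‖·‖_TV); in particular there exists π ∈ 𝒫(E) with ‖μ_n − π‖_TV → 0. -/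
open MeasureTheory ProbabilityTheory

namespace TVAux

variable {E : Type*} [MeasurableSpace E]



lemma tv_bdd (μ ν : Measure E) [IsFiniteMeasure μ] [IsFiniteMeasure ν] :
    BddAbove (Set.range fun A : {s : Set E // MeasurableSet s} =>
      |(μ A).toReal - (ν A).toReal|) := by
  refine ⟨(μ Set.univ).toReal + (ν Set.univ).toReal, ?_⟩
  rintro x ⟨A, rfl⟩
  have h1 : ((μ : Measure E) A).toReal ≤ (μ Set.univ).toReal :=
    ENNReal.toReal_mono (measure_ne_top _ _) (measure_mono (Set.subset_univ _))
  have h2 : ((ν : Measure E) A).toReal ≤ (ν Set.univ).toReal :=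
    ENNReal.toReal_mono (measure_ne_top _ _) (measure_mono (Set.subset_univ _))
  have h3 : 0 ≤ ((μ : Measure E) A).toReal := ENNReal.toReal_nonneg
  have h4 : 0 ≤ ((ν : Measure E) A).toReal := ENNReal.toReal_nonneg
  rw [abs_le]
  constructor <;> linarith

lemma tvDist_nonneg (μ ν : Measure E) : 0 ≤ tvDist μ ν := by
  have : (0:ℝ) ≤ ⨆ A : {s : Set E // MeasurableSet s}, |(μ A).toReal - (ν A).toReal| :=
    Real.iSup_nonneg fun A => abs_nonneg _
  unfold tvDist; linarith

lemma abs_le_half_tvDist (μ ν : Measure E) [IsFiniteMeasure μ] [IsFiniteMeasure ν]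
    {A : Set E} (hA : MeasurableSet A) :
    |(μ A).toReal - (ν A).toReal| ≤ tvDist μ ν / 2 := by
  have := le_ciSup (tv_bdd μ ν) (⟨A, hA⟩ : {s : Set E // MeasurableSet s})
  unfold tvDist; linarith

lemma tvDist_le {μ ν : Measure E} {K : ℝ} (hK : 0 ≤ K)
    (h : ∀ A : Set E, MeasurableSet A → |(μ A).toReal - (ν A).toReal| ≤ K) :
    tvDist μ ν ≤ 2 * K := by
  have : (⨆ A : {s : Set E // MeasurableSet s}, |(μ A).toReal - (ν A).toReal|) ≤ K :=
    Real.iSup_le (fun A => h A A.2) hK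
  unfold tvDist; linarith

lemma tvDist_comm (μ ν : Measure E) : tvDist μ ν = tvDist ν μ := by
  unfold tvDist
  congr 1
  exact congrArg _ (funext fun A => abs_sub_comm _ _)

lemma tvDist_le_two (μ ν : Measure E) [IsProbabilityMeasure μ] [IsProbabilityMeasure ν] :
    tvDist μ ν ≤ 2 := by
  have := tvDist_le (μ := μ) (ν := ν) (K := 1) zero_le_one (fun A hA => by
    have h1 : ((μ : Measure E) A).toReal ≤ 1 := by
      have := prob_le_one (μ := μ) (s := A)
      simpa using ENNReal.toReal_mono ENNReal.one_ne_top this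
    have h2 : ((ν : Measure E) A).toReal ≤ 1 := by
      have := prob_le_one (μ := ν) (s := A)
      simpa using ENNReal.toReal_mono ENNReal.one_ne_top this
    have h3 : 0 ≤ ((μ : Measure E) A).toReal := ENNReal.toReal_nonneg
    have h4 : 0 ≤ ((ν : Measure E) A).toReal := ENNReal.toReal_nonneg
    rw [abs_le]; constructor <;> linarith)
  linarith


lemma isProb_bind (μ : Measure E) [IsProbabilityMeasure μ]
    (κ : Kernel E E) [IsMarkovKernel κ] :
    IsProbabilityMeasure (μ.bind (fun x => κ x)) := by
  constructor
  rw [Measure.bind_apply MeasurableSet.univ (Kernel.measurable κ).aemeasurable]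
  simp

variable (P : Measure E → Kernel E E)

lemma isProb_step (hP : ∀ μ, IsMarkovKernel (P μ)) (μ : Measure E) (hμ : IsProbabilityMeasure μ) :
    IsProbabilityMeasure (stepMeasure P μ) := by
  have := hP μ; have := hμ
  exact isProb_bind μ (P μ)

lemma isProb_twoStep (hP : ∀ μ, IsMarkovKernel (P μ)) (μ : Measure E) (x : E) :
    IsProbabilityMeasure (twoStepKernel P μ x) := by
  have := hP μ; have := hP (stepMeasure P μ)
  have : IsProbabilityMeasure ((P μ) x) := IsMarkovKernel.isProbabilityMeasure x
  exact isProb_bind _ (P (stepMeasure P μ))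

lemma isProb_marginal (hP : ∀ μ, IsMarkovKernel (P μ)) (μ0 : Measure E) (hμ0 : IsProbabilityMeasure μ0) :
    ∀ n, IsProbabilityMeasure (marginal P μ0 n)
  | 0 => hμ0
  | n + 1 => isProb_step P hP _ (isProb_marginal hP μ0 hμ0 n)

lemma measurable_twoStep (μ : Measure E) :
    Measurable (fun x => twoStepKernel P μ x) :=
  (Measure.measurable_bind' (Kernel.measurable _)).comp (Kernel.measurable (P μ))

lemma marginal_two_step (μ0 : Measure E) (n : ℕ) :
    marginal P μ0 (n + 2) =
      (marginal P μ0 n).bind (twoStepKernel P (marginal P μ0 n)) := by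
  show stepMeasure P (stepMeasure P (marginal P μ0 n)) = _
  set μ := marginal P μ0 n
  show (μ.bind (fun x => P μ x)).bind (fun y => P (stepMeasure P μ) y) = _
  rw [Measure.bind_bind (Kernel.measurable (P μ)).aemeasurable (Kernel.measurable (P (stepMeasure P μ))).aemeasurable]
  rfl


lemma toReal_prob_le_one (μ : Measure E) [IsProbabilityMeasure μ] (A : Set E) :
    (μ A).toReal ≤ 1 := by
  simpa using ENNReal.toReal_mono ENNReal.one_ne_top (prob_le_one (μ := μ) (s := A))

lemma toReal_add_compl (μ : Measure E) [IsProbabilityMeasure μ] {S : Set E}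
    (hS : MeasurableSet S) : (μ S).toReal + (μ Sᶜ).toReal = 1 := by
  have h := measure_add_measure_compl (μ := μ) hS
  rw [measure_univ] at h
  have := congrArg ENNReal.toReal h
  rwa [ENNReal.toReal_add (measure_ne_top _ _) (measure_ne_top _ _), ENNReal.toReal_one] at this

lemma bind_toReal_le (μ ν : Measure E) [IsProbabilityMeasure μ] [IsProbabilityMeasure ν]
    (Qμ Qν : E → Measure E) (hQμ : Measurable Qμ) (hQν : Measurable Qν)
    (hQμ1 : ∀ x, IsProbabilityMeasure (Qμ x)) (hQν1 : ∀ x, IsProbabilityMeasure (Qν x))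
    (c₁ c₂ : ℝ) (hc₁ : 0 ≤ c₁) (hc₂ : 0 ≤ c₂)
    (h1 : ∀ x y (A : Set E), MeasurableSet A → (Qμ x A).toReal ≤ (Qν y A).toReal + c₁)
    (h2 : ∀ x (A : Set E), MeasurableSet A → (Qμ x A).toReal ≤ (Qν x A).toReal + c₂)
    (S : Set E) (hS : MeasurableSet S)
    (hS1 : ∀ t, MeasurableSet t → t ⊆ S → ν t ≤ μ t)
    (hS2 : ∀ t, MeasurableSet t → t ⊆ Sᶜ → μ t ≤ ν t)
    (p : ℝ) (hp : (μ S).toReal = (ν S).toReal + p)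
    {A : Set E} (hA : MeasurableSet A) :
    ((μ.bind Qμ) A).toReal ≤ ((ν.bind Qν) A).toReal + ((1 - p) * c₂ + p * c₁) := by
  -- basic facts about p
  have hp0 : 0 ≤ p := by
    have h := ENNReal.toReal_mono (measure_ne_top μ S) (hS1 S hS subset_rfl)
    linarith
  have hp1 : p ≤ 1 := by
    have h1' := toReal_prob_le_one μ S
    have h2' : (0:ℝ) ≤ (ν S).toReal := ENNReal.toReal_nonneg
    linarith
  -- measure decompositions
  have hle : ν.restrict S ≤ μ.restrict S := by
    refine Measure.le_iff.2 fun t ht => ?_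
    rw [Measure.restrict_apply ht, Measure.restrict_apply ht]
    exact hS1 _ (ht.inter hS) Set.inter_subset_right
  have hle' : μ.restrict Sᶜ ≤ ν.restrict Sᶜ := by
    refine Measure.le_iff.2 fun t ht => ?_
    rw [Measure.restrict_apply ht, Measure.restrict_apply ht]
    exact hS2 _ (ht.inter hS.compl) Set.inter_subset_right
  set ξ : Measure E := μ.restrict S - ν.restrict S with hξdef
  set η : Measure E := ν.restrict Sᶜ - μ.restrict Sᶜ with hηdef
  have hdecμ : ξ + ν.restrict S = μ.restrict S := Measure.sub_add_cancel_of_le hle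
  have hdecν : η + μ.restrict Sᶜ = ν.restrict Sᶜ := Measure.sub_add_cancel_of_le hle'
  set M : ENNReal := ξ Set.univ with hMdef
  have hM : M = μ S - ν S := by
    rw [hMdef, hξdef, Measure.sub_apply MeasurableSet.univ hle,
      Measure.restrict_apply_univ, Measure.restrict_apply_univ]
  have hMne : M ≠ ⊤ := by
    rw [hM]; exact ne_top_of_le_ne_top (measure_ne_top μ S) tsub_le_self
  have hMp : M.toReal = p := by
    rw [hM, ENNReal.toReal_sub_of_le (hS1 S hS subset_rfl) (measure_ne_top μ S)]
    linarith
  have hcomplμ : (μ Sᶜ).toReal = 1 - (μ S).toReal := by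
    have := toReal_add_compl μ hS; linarith
  have hcomplν : (ν Sᶜ).toReal = 1 - (ν S).toReal := by
    have := toReal_add_compl ν hS; linarith
  have hη : η Set.univ = M := by
    have hη1 : η Set.univ = ν Sᶜ - μ Sᶜ := by
      rw [hηdef, Measure.sub_apply MeasurableSet.univ hle',
        Measure.restrict_apply_univ, Measure.restrict_apply_univ]
    have hle2 : μ Sᶜ ≤ ν Sᶜ := hS2 Sᶜ hS.compl subset_rfl
    have hηne : η Set.univ ≠ ⊤ := by
      rw [hη1]; exact ne_top_of_le_ne_top (measure_ne_top ν Sᶜ) tsub_le_self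
    have hηp : (η Set.univ).toReal = p := by
      rw [hη1, ENNReal.toReal_sub_of_le hle2 (measure_ne_top ν Sᶜ)]
      linarith
    exact (ENNReal.toReal_eq_toReal_iff' hηne hMne).mp (by rw [hηp, hMp])
  -- measurability of integrands
  have mfμ : Measurable fun x => Qμ x A := (Measure.measurable_coe hA).comp hQμ
  have mfν : Measurable fun x => Qν x A := (Measure.measurable_coe hA).comp hQν
  -- pointwise ENNReal bounds
  have e2 : ∀ x, Qμ x A ≤ Qν x A + ENNReal.ofReal c₂ := by
    intro x
    calc Qμ x A = ENNReal.ofReal (Qμ x A).toReal :=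
          (ENNReal.ofReal_toReal (measure_ne_top _ _)).symm
      _ ≤ ENNReal.ofReal ((Qν x A).toReal + c₂) := ENNReal.ofReal_le_ofReal (h2 x A hA)
      _ = ENNReal.ofReal (Qν x A).toReal + ENNReal.ofReal c₂ :=
          ENNReal.ofReal_add ENNReal.toReal_nonneg hc₂
      _ = Qν x A + ENNReal.ofReal c₂ := by rw [ENNReal.ofReal_toReal (measure_ne_top _ _)]
  have e1 : ∀ x y, Qμ x A ≤ Qν y A + ENNReal.ofReal c₁ := by
    intro x y
    calc Qμ x A = ENNReal.ofReal (Qμ x A).toReal :=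
          (ENNReal.ofReal_toReal (measure_ne_top _ _)).symm
      _ ≤ ENNReal.ofReal ((Qν y A).toReal + c₁) := ENNReal.ofReal_le_ofReal (h1 x y A hA)
      _ = ENNReal.ofReal (Qν y A).toReal + ENNReal.ofReal c₁ :=
          ENNReal.ofReal_add ENNReal.toReal_nonneg hc₁
      _ = Qν y A + ENNReal.ofReal c₁ := by rw [ENNReal.ofReal_toReal (measure_ne_top _ _)]
  -- integral bounds
  have I2 : ∫⁻ x, Qμ x A ∂(ν.restrict S) ≤
      ∫⁻ x, Qν x A ∂(ν.restrict S) + ENNReal.ofReal c₂ * ν S := by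
    calc ∫⁻ x, Qμ x A ∂(ν.restrict S) ≤ ∫⁻ x, (Qν x A + ENNReal.ofReal c₂) ∂(ν.restrict S) :=
          lintegral_mono e2
      _ = ∫⁻ x, Qν x A ∂(ν.restrict S) + ENNReal.ofReal c₂ * ν S := by
          rw [lintegral_add_right _ measurable_const, lintegral_const,
            Measure.restrict_apply_univ]
  have I2' : ∫⁻ x, Qμ x A ∂(μ.restrict Sᶜ) ≤
      ∫⁻ x, Qν x A ∂(μ.restrict Sᶜ) + ENNReal.ofReal c₂ * μ Sᶜ := by
    calc ∫⁻ x, Qμ x A ∂(μ.restrict Sᶜ) ≤ ∫⁻ x, (Qν x A + ENNReal.ofReal c₂) ∂(μ.restrict Sᶜ) :=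
          lintegral_mono e2
      _ = ∫⁻ x, Qν x A ∂(μ.restrict Sᶜ) + ENNReal.ofReal c₂ * μ Sᶜ := by
          rw [lintegral_add_right _ measurable_const, lintegral_const,
            Measure.restrict_apply_univ]
  have I1 : ∫⁻ x, Qμ x A ∂ξ ≤ ∫⁻ x, Qν x A ∂η + ENNReal.ofReal c₁ * M := by
    by_cases hM0 : M = 0
    · have : ξ = 0 := Measure.measure_univ_eq_zero.mp (hMdef ▸ hM0)
      rw [this]; simp
    · have key1 : ∀ y, ∫⁻ x, Qμ x A ∂ξ ≤ (Qν y A + ENNReal.ofReal c₁) * M := by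
        intro y
        calc ∫⁻ x, Qμ x A ∂ξ ≤ ∫⁻ _, (Qν y A + ENNReal.ofReal c₁) ∂ξ :=
              lintegral_mono fun x => e1 x y
          _ = (Qν y A + ENNReal.ofReal c₁) * M := by rw [lintegral_const]
      have step : (∫⁻ x, Qμ x A ∂ξ) * M ≤
          (∫⁻ y, Qν y A ∂η + ENNReal.ofReal c₁ * M) * M := by
        calc (∫⁻ x, Qμ x A ∂ξ) * M = ∫⁻ _, (∫⁻ x, Qμ x A ∂ξ) ∂η := by
              rw [lintegral_const, hη]
          _ ≤ ∫⁻ y, (Qν y A + ENNReal.ofReal c₁) * M ∂η := lintegral_mono key1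
          _ = (∫⁻ y, (Qν y A + ENNReal.ofReal c₁) ∂η) * M :=
              lintegral_mul_const _ (mfν.add measurable_const)
          _ = (∫⁻ y, Qν y A ∂η + ENNReal.ofReal c₁ * M) * M := by
              rw [lintegral_add_right _ measurable_const, lintegral_const, hη]
      exact (ENNReal.mul_le_mul_iff_left hM0 hMne).mp step
  -- assemble
  have hbμ : (μ.bind Qμ) A =
      ∫⁻ x, Qμ x A ∂ξ + ∫⁻ x, Qμ x A ∂(ν.restrict S) + ∫⁻ x, Qμ x A ∂(μ.restrict Sᶜ) := by
    rw [Measure.bind_apply hA hQμ.aemeasurable, ← lintegral_add_compl (fun x => Qμ x A) hS, ← hdecμ,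
      lintegral_add_measure]
  have hbν : (ν.bind Qν) A =
      ∫⁻ x, Qν x A ∂(ν.restrict S) + (∫⁻ x, Qν x A ∂η + ∫⁻ x, Qν x A ∂(μ.restrict Sᶜ)) := by
    rw [Measure.bind_apply hA hQν.aemeasurable, ← lintegral_add_compl (fun x => Qν x A) hS, ← hdecν,
      lintegral_add_measure]
  have hEN : (μ.bind Qμ) A ≤ (ν.bind Qν) A +
      (ENNReal.ofReal c₂ * (ν S + μ Sᶜ) + ENNReal.ofReal c₁ * M) := by
    rw [hbμ, hbν]
    calc ∫⁻ x, Qμ x A ∂ξ + ∫⁻ x, Qμ x A ∂(ν.restrict S) + ∫⁻ x, Qμ x A ∂(μ.restrict Sᶜ)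
        ≤ (∫⁻ x, Qν x A ∂η + ENNReal.ofReal c₁ * M) +
          (∫⁻ x, Qν x A ∂(ν.restrict S) + ENNReal.ofReal c₂ * ν S) +
          (∫⁻ x, Qν x A ∂(μ.restrict Sᶜ) + ENNReal.ofReal c₂ * μ Sᶜ) :=
          add_le_add (add_le_add I1 I2) I2'
      _ = ∫⁻ x, Qν x A ∂(ν.restrict S) + (∫⁻ x, Qν x A ∂η + ∫⁻ x, Qν x A ∂(μ.restrict Sᶜ)) +
          (ENNReal.ofReal c₂ * (ν S + μ Sᶜ) + ENNReal.ofReal c₁ * M) := by ring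
  -- convert to real
  have hfinν : (ν.bind Qν) A ≠ ⊤ := by
    have : IsProbabilityMeasure (ν.bind Qν) := by
      constructor
      rw [Measure.bind_apply MeasurableSet.univ hQν.aemeasurable]
      simp only [measure_univ]
      simp
    exact measure_ne_top _ _
  have hCne : (ENNReal.ofReal c₂ * (ν S + μ Sᶜ) + ENNReal.ofReal c₁ * M) ≠ ⊤ := by
    refine ENNReal.add_ne_top.mpr ⟨?_, ?_⟩
    · exact ENNReal.mul_ne_top ENNReal.ofReal_ne_top
        (ENNReal.add_ne_top.mpr ⟨measure_ne_top _ _, measure_ne_top _ _⟩)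
    · exact ENNReal.mul_ne_top ENNReal.ofReal_ne_top hMne
  have := ENNReal.toReal_mono (ENNReal.add_ne_top.mpr ⟨hfinν, hCne⟩) hEN
  rw [ENNReal.toReal_add hfinν hCne, ENNReal.toReal_add
      (ENNReal.mul_ne_top ENNReal.ofReal_ne_top
        (ENNReal.add_ne_top.mpr ⟨measure_ne_top _ _, measure_ne_top _ _⟩))
      (ENNReal.mul_ne_top ENNReal.ofReal_ne_top hMne),
    ENNReal.toReal_mul, ENNReal.toReal_mul, ENNReal.toReal_ofReal hc₂,
    ENNReal.toReal_ofReal hc₁, hMp,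
    ENNReal.toReal_add (measure_ne_top _ _) (measure_ne_top _ _)] at this
  have harith : (ν S).toReal + (μ Sᶜ).toReal = 1 - p := by
    rw [hcomplμ]; linarith
  rw [harith] at this
  linarith

lemma tvDist_le' {μ ν : Measure E} {K : ℝ} (hK : 0 ≤ K)
    (h : ∀ A : Set E, MeasurableSet A → |(μ A).toReal - (ν A).toReal| ≤ K) :
    tvDist μ ν ≤ 2 * K := by
  have : (⨆ A : {s : Set E // MeasurableSet s}, |(μ A).toReal - (ν A).toReal|) ≤ K :=
    Real.iSup_le (fun A => h A A.2) hK
  unfold tvDist; linarith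

lemma tv_bdd' (μ ν : Measure E) [IsFiniteMeasure μ] [IsFiniteMeasure ν] :
    BddAbove (Set.range fun A : {s : Set E // MeasurableSet s} =>
      |(μ A).toReal - (ν A).toReal|) := by
  refine ⟨(μ Set.univ).toReal + (ν Set.univ).toReal, ?_⟩
  rintro x ⟨A, rfl⟩
  have h1 : ((μ : Measure E) A).toReal ≤ (μ Set.univ).toReal :=
    ENNReal.toReal_mono (measure_ne_top _ _) (measure_mono (Set.subset_univ _))
  have h2 : ((ν : Measure E) A).toReal ≤ (ν Set.univ).toReal :=
    ENNReal.toReal_mono (measure_ne_top _ _) (measure_mono (Set.subset_univ _))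
  have h3 : 0 ≤ ((μ : Measure E) A).toReal := ENNReal.toReal_nonneg
  have h4 : 0 ≤ ((ν : Measure E) A).toReal := ENNReal.toReal_nonneg
  rw [abs_le]; constructor <;> linarith

lemma tvDist_eq_of_hahn (μ ν : Measure E) [IsProbabilityMeasure μ] [IsProbabilityMeasure ν]
    (S : Set E) (hS : MeasurableSet S)
    (hS1 : ∀ t, MeasurableSet t → t ⊆ S → ν t ≤ μ t)
    (hS2 : ∀ t, MeasurableSet t → t ⊆ Sᶜ → μ t ≤ ν t) :
    tvDist μ ν = 2 * ((μ S).toReal - (ν S).toReal) := by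
  set p : ℝ := (μ S).toReal - (ν S).toReal with hpdef
  have hp0 : 0 ≤ p := by
    have h := ENNReal.toReal_mono (measure_ne_top μ S) (hS1 S hS subset_rfl)
    simp only [hpdef]; linarith
  have key : ∀ A : Set E, MeasurableSet A → |(μ A).toReal - (ν A).toReal| ≤ p := by
    intro A hA
    have splitμA : (μ (A ∩ S)).toReal + (μ (A \ S)).toReal = (μ A).toReal := by
      rw [← ENNReal.toReal_add (measure_ne_top _ _) (measure_ne_top _ _),
        measure_inter_add_diff A hS]
    have splitνA : (ν (A ∩ S)).toReal + (ν (A \ S)).toReal = (ν A).toReal := by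
      rw [← ENNReal.toReal_add (measure_ne_top _ _) (measure_ne_top _ _),
        measure_inter_add_diff A hS]
    have splitμS : (μ (A ∩ S)).toReal + (μ (S \ A)).toReal = (μ S).toReal := by
      rw [Set.inter_comm, ← ENNReal.toReal_add (measure_ne_top _ _) (measure_ne_top _ _),
        measure_inter_add_diff S hA]
    have splitνS : (ν (A ∩ S)).toReal + (ν (S \ A)).toReal = (ν S).toReal := by
      rw [Set.inter_comm, ← ENNReal.toReal_add (measure_ne_top _ _) (measure_ne_top _ _),
        measure_inter_add_diff S hA]
    have hACeq : Sᶜ ∩ A = A \ S := by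
      ext x; simp [Set.mem_diff, and_comm]
    have splitμC : (μ (A \ S)).toReal + (μ (Sᶜ \ A)).toReal = (μ Sᶜ).toReal := by
      rw [← hACeq, ← ENNReal.toReal_add (measure_ne_top _ _) (measure_ne_top _ _),
        measure_inter_add_diff Sᶜ hA]
    have splitνC : (ν (A \ S)).toReal + (ν (Sᶜ \ A)).toReal = (ν Sᶜ).toReal := by
      rw [← hACeq, ← ENNReal.toReal_add (measure_ne_top _ _) (measure_ne_top _ _),
        measure_inter_add_diff Sᶜ hA]
    have i1 : (ν (A ∩ S)).toReal ≤ (μ (A ∩ S)).toReal :=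
      ENNReal.toReal_mono (measure_ne_top _ _) (hS1 _ (hA.inter hS) Set.inter_subset_right)
    have i2 : (μ (A \ S)).toReal ≤ (ν (A \ S)).toReal :=
      ENNReal.toReal_mono (measure_ne_top _ _) (hS2 _ (hA.diff hS) (fun x hx => hx.2))
    have i3 : (ν (S \ A)).toReal ≤ (μ (S \ A)).toReal :=
      ENNReal.toReal_mono (measure_ne_top _ _) (hS1 _ (hS.diff hA) Set.diff_subset)
    have i4 : (μ (Sᶜ \ A)).toReal ≤ (ν (Sᶜ \ A)).toReal :=
      ENNReal.toReal_mono (measure_ne_top _ _) (hS2 _ (hS.compl.diff hA) Set.diff_subset)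
    have cμ := toReal_add_compl μ hS
    have cν := toReal_add_compl ν hS
    rw [abs_le]
    constructor <;> simp only [hpdef] <;> linarith
  have hub : tvDist μ ν ≤ 2 * p := tvDist_le' hp0 key
  have hlb : p ≤ tvDist μ ν / 2 := by
    have h := le_ciSup (tv_bdd' μ ν) (⟨S, hS⟩ : {s : Set E // MeasurableSet s})
    have : |(μ S).toReal - (ν S).toReal| = p := abs_of_nonneg hp0
    unfold tvDist
    simp only [this] at h
    linarith [h]
  linarith

theorem contraction
    (P : Measure E → Kernel E E) (hP : ∀ μ, IsMarkovKernel (P μ))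
    (α₂ lam₂ : ℝ) (hα₂0 : 0 < α₂) (hα₂1 : α₂ < 1)
    (hlam₂0 : 0 ≤ lam₂) (hlam₂α : lam₂ ≤ α₂)
    (C1 : ∀ (μ ν : Measure E), IsProbabilityMeasure μ → IsProbabilityMeasure ν →
      ∀ x y : E, tvDist (twoStepKernel P μ x) (twoStepKernel P ν y) ≤ 2 * (1 - α₂))
    (C2 : ∀ (μ ν : Measure E), IsProbabilityMeasure μ → IsProbabilityMeasure ν →
      ∀ x : E, tvDist (twoStepKernel P μ x) (twoStepKernel P ν x) ≤ lam₂ * tvDist μ ν)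
    (μ ν : Measure E) (hμ : IsProbabilityMeasure μ) (hν : IsProbabilityMeasure ν) :
    tvDist (μ.bind (twoStepKernel P μ)) (ν.bind (twoStepKernel P ν)) ≤
      tvDist μ ν - α₂ / 2 * (tvDist μ ν) ^ 2 := by
  haveI := hμ; haveI := hν
  obtain ⟨S, hS, hS1, hS2⟩ := hahn_decomposition (μ := μ) (ν := ν)
  set p : ℝ := (μ S).toReal - (ν S).toReal with hpdef
  have hd : tvDist μ ν = 2 * p := tvDist_eq_of_hahn μ ν S hS hS1 hS2
  have hp0 : 0 ≤ p := by
    have := tvDist_nonneg μ ν; linarith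
  have hp1 : p ≤ 1 := by
    have h2 := tvDist_le_two μ ν; linarith
  set c₁ : ℝ := 1 - α₂ with hc₁def
  set c₂ : ℝ := lam₂ * p with hc₂def
  have hc₁0 : 0 ≤ c₁ := by simp only [hc₁def]; linarith
  have hc₂0 : 0 ≤ c₂ := mul_nonneg hlam₂0 hp0
  haveI hQμ1 : ∀ x, IsProbabilityMeasure (twoStepKernel P μ x) := isProb_twoStep P hP μ
  haveI hQν1 : ∀ x, IsProbabilityMeasure (twoStepKernel P ν x) := isProb_twoStep P hP ν
  have h1 : ∀ x y (A : Set E), MeasurableSet A →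
      ((twoStepKernel P μ x) A).toReal ≤ ((twoStepKernel P ν y) A).toReal + c₁ := by
    intro x y A hA
    haveI := hQμ1 x; haveI := hQν1 y
    have habs := abs_le_half_tvDist (twoStepKernel P μ x) (twoStepKernel P ν y) hA
    have := C1 μ ν hμ hν x y
    rw [abs_le] at habs
    simp only [hc₁def]; linarith [habs.2]
  have h1' : ∀ x y (A : Set E), MeasurableSet A →
      ((twoStepKernel P ν x) A).toReal ≤ ((twoStepKernel P μ y) A).toReal + c₁ := by
    intro x y A hA
    haveI := hQν1 x; haveI := hQμ1 y
    have habs := abs_le_half_tvDist (twoStepKernel P ν x) (twoStepKernel P μ y) hA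
    have := C1 ν μ hν hμ x y
    rw [abs_le] at habs
    simp only [hc₁def]; linarith [habs.2]
  have h2 : ∀ x (A : Set E), MeasurableSet A →
      ((twoStepKernel P μ x) A).toReal ≤ ((twoStepKernel P ν x) A).toReal + c₂ := by
    intro x A hA
    haveI := hQμ1 x; haveI := hQν1 x
    have habs := abs_le_half_tvDist (twoStepKernel P μ x) (twoStepKernel P ν x) hA
    have := C2 μ ν hμ hν x
    rw [abs_le] at habs
    simp only [hc₂def]; rw [hd] at this; linarith [habs.2]
  have h2' : ∀ x (A : Set E), MeasurableSet A →
      ((twoStepKernel P ν x) A).toReal ≤ ((twoStepKernel P μ x) A).toReal + c₂ := by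
    intro x A hA
    haveI := hQν1 x; haveI := hQμ1 x
    have habs := abs_le_half_tvDist (twoStepKernel P ν x) (twoStepKernel P μ x) hA
    have := C2 ν μ hν hμ x
    rw [abs_le] at habs
    rw [tvDist_comm ν μ, hd] at this
    simp only [hc₂def]; linarith [habs.2]
  -- complement mass identity
  have hcμ : (μ Sᶜ).toReal = 1 - (μ S).toReal := by
    have h := measure_add_measure_compl (μ := μ) hS
    rw [measure_univ] at h
    have := congrArg ENNReal.toReal h
    rw [ENNReal.toReal_add (measure_ne_top _ _) (measure_ne_top _ _), ENNReal.toReal_one] at this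
    linarith
  have hcν : (ν Sᶜ).toReal = 1 - (ν S).toReal := by
    have h := measure_add_measure_compl (μ := ν) hS
    rw [measure_univ] at h
    have := congrArg ENNReal.toReal h
    rw [ENNReal.toReal_add (measure_ne_top _ _) (measure_ne_top _ _), ENNReal.toReal_one] at this
    linarith
  have key : ∀ A : Set E, MeasurableSet A →
      |((μ.bind (twoStepKernel P μ)) A).toReal - ((ν.bind (twoStepKernel P ν)) A).toReal| ≤
        (1 - p) * c₂ + p * c₁ := by
    intro A hA
    have d1 := bind_toReal_le μ ν (twoStepKernel P μ) (twoStepKernel P ν)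
      (measurable_twoStep P μ) (measurable_twoStep P ν) hQμ1 hQν1 c₁ c₂ hc₁0 hc₂0
      h1 h2 S hS hS1 hS2 p (by simp only [hpdef]; ring) hA
    have d2 := bind_toReal_le ν μ (twoStepKernel P ν) (twoStepKernel P μ)
      (measurable_twoStep P ν) (measurable_twoStep P μ) hQν1 hQμ1 c₁ c₂ hc₁0 hc₂0
      h1' h2' Sᶜ hS.compl
      (fun t ht hts => hS2 t ht hts)
      (fun t ht hts => hS1 t ht (by rwa [compl_compl] at hts))
      p (by rw [hcμ, hcν]; simp only [hpdef]; ring) hA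
    rw [abs_le]; constructor <;> linarith
  have hKnn : 0 ≤ (1 - p) * c₂ + p * c₁ :=
    add_nonneg (mul_nonneg (by linarith) hc₂0) (mul_nonneg hp0 hc₁0)
  have := tvDist_le' hKnn key
  rw [hd]
  simp only [hc₁def, hc₂def] at this
  have hint : 0 ≤ p * (1 - p) * (α₂ - lam₂) :=
    mul_nonneg (mul_nonneg hp0 (by linarith)) (by linarith)
  clear_value c₂ c₁ p
  nlinarith [hint, this]

lemma rec_arith (c x t : ℝ) (hc0 : 0 < c) (hc1 : c < 1) (hx0 : 0 ≤ x) (hx2 : x ≤ 2)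
    (ht : 0 ≤ t) (h : x * (1 + t) ≤ 2) : (x - c / 2 * x ^ 2) * (1 + t + c) ≤ 2 := by
  have hA : 0 ≤ 2 - x * (1 + t) := by linarith
  have hcx : c * x ≤ 2 := by nlinarith
  have h1 : 0 ≤ 1 - c * x / 2 := by linarith
  nlinarith [mul_nonneg hA h1, sq_nonneg (c * x), mul_nonneg (mul_nonneg hc0.le hc0.le) (sq_nonneg x)]

theorem marg_pair_bound
    (P : Measure E → Kernel E E) (hP : ∀ μ, IsMarkovKernel (P μ))
    (α₂ lam₂ : ℝ) (hα₂0 : 0 < α₂) (hα₂1 : α₂ < 1)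
    (hlam₂0 : 0 ≤ lam₂) (hlam₂α : lam₂ ≤ α₂)
    (C1 : ∀ (μ ν : Measure E), IsProbabilityMeasure μ → IsProbabilityMeasure ν →
      ∀ x y : E, tvDist (twoStepKernel P μ x) (twoStepKernel P ν y) ≤ 2 * (1 - α₂))
    (C2 : ∀ (μ ν : Measure E), IsProbabilityMeasure μ → IsProbabilityMeasure ν →
      ∀ x : E, tvDist (twoStepKernel P μ x) (twoStepKernel P ν x) ≤ lam₂ * tvDist μ ν)
    (μ0 : Measure E) (hμ0 : IsProbabilityMeasure μ0) :
    ∀ (k a b : ℕ), tvDist (marginal P μ0 (a + 2 * k)) (marginal P μ0 (b + 2 * k)) ≤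
      2 / (1 + α₂ * k) := by
  intro k
  induction k with
  | zero =>
    intro a b
    haveI := isProb_marginal P hP μ0 hμ0 (a + 2 * 0)
    haveI := isProb_marginal P hP μ0 hμ0 (b + 2 * 0)
    simpa using tvDist_le_two (marginal P μ0 (a + 2 * 0)) (marginal P μ0 (b + 2 * 0))
  | succ k ih =>
    intro a b
    haveI := isProb_marginal P hP μ0 hμ0 (a + 2 * k)
    haveI := isProb_marginal P hP μ0 hμ0 (b + 2 * k)
    set x : ℝ := tvDist (marginal P μ0 (a + 2 * k)) (marginal P μ0 (b + 2 * k)) with hx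
    have hx0 : 0 ≤ x := tvDist_nonneg _ _
    have hx2 : x ≤ 2 := tvDist_le_two _ _
    have hcon : tvDist (marginal P μ0 (a + 2 * (k + 1))) (marginal P μ0 (b + 2 * (k + 1))) ≤
        x - α₂ / 2 * x ^ 2 := by
      have ha : a + 2 * (k + 1) = (a + 2 * k) + 2 := by omega
      have hb : b + 2 * (k + 1) = (b + 2 * k) + 2 := by omega
      rw [ha, hb, marginal_two_step, marginal_two_step]
      exact contraction P hP α₂ lam₂ hα₂0 hα₂1 hlam₂0 hlam₂α C1 C2 _ _
        (isProb_marginal P hP μ0 hμ0 _) (isProb_marginal P hP μ0 hμ0 _)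
    have ht : (0:ℝ) ≤ α₂ * k := mul_nonneg hα₂0.le (Nat.cast_nonneg k)
    have hden : (0:ℝ) < 1 + α₂ * k := by linarith
    have hih : x * (1 + α₂ * k) ≤ 2 := by
      have := ih a b
      rw [← hx] at this
      calc x * (1 + α₂ * k) ≤ 2 / (1 + α₂ * k) * (1 + α₂ * k) :=
            mul_le_mul_of_nonneg_right this hden.le
        _ = 2 := by field_simp
    have harith := rec_arith α₂ x (α₂ * k) hα₂0 hα₂1 hx0 hx2 ht hih
    have hden' : (0:ℝ) < 1 + α₂ * (k + 1 : ℕ) := by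
      push_cast
      nlinarith
    rw [le_div_iff₀ hden']
    calc tvDist (marginal P μ0 (a + 2 * (k + 1))) (marginal P μ0 (b + 2 * (k + 1))) *
          (1 + α₂ * (k + 1 : ℕ))
        ≤ (x - α₂ / 2 * x ^ 2) * (1 + α₂ * (k + 1 : ℕ)) := by
          refine mul_le_mul_of_nonneg_right hcon (by linarith)
      _ ≤ 2 := by
          have : ((k + 1 : ℕ) : ℝ) = (k : ℝ) + 1 := by push_cast; ring
          rw [this, show 1 + α₂ * ((k:ℝ) + 1) = 1 + α₂ * k + α₂ by ring]
          exact harith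

theorem cauchy_marg
    (P : Measure E → Kernel E E) (hP : ∀ μ, IsMarkovKernel (P μ))
    (α₂ lam₂ : ℝ) (hα₂0 : 0 < α₂) (hα₂1 : α₂ < 1)
    (hlam₂0 : 0 ≤ lam₂) (hlam₂α : lam₂ ≤ α₂)
    (C1 : ∀ (μ ν : Measure E), IsProbabilityMeasure μ → IsProbabilityMeasure ν →
      ∀ x y : E, tvDist (twoStepKernel P μ x) (twoStepKernel P ν y) ≤ 2 * (1 - α₂))
    (C2 : ∀ (μ ν : Measure E), IsProbabilityMeasure μ → IsProbabilityMeasure ν →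
      ∀ x : E, tvDist (twoStepKernel P μ x) (twoStepKernel P ν x) ≤ lam₂ * tvDist μ ν)
    (μ0 : Measure E) (hμ0 : IsProbabilityMeasure μ0) (m n : ℕ) :
    tvDist (marginal P μ0 m) (marginal P μ0 n) ≤ 2 / (1 + α₂ * (min m n / 2 : ℕ)) := by
  set k : ℕ := min m n / 2 with hk
  have hm : m = (m - 2 * k) + 2 * k := by omega
  have hn : n = (n - 2 * k) + 2 * k := by omega
  rw [hm, hn]
  exact marg_pair_bound P hP α₂ lam₂ hα₂0 hα₂1 hlam₂0 hlam₂α C1 C2 μ0 hμ0 k _ _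

end TVAux

open TVAux Filter in
/-- under (C1), (C2), (C3) the sequence of marginals `(μ_n)` is Cauchy in
total variation, and there exists `π ∈ 𝒫(E)` with `‖μ_n − π‖_TV → 0`. -/
theorem marginals_cauchy_and_converge
    {E : Type*} [MeasurableSpace E] [Nonempty E]
    (P : Measure E → Kernel E E) (hP : ∀ μ, IsMarkovKernel (P μ))
    (α₂ lam₁ lam₂ : ℝ) (hα₂0 : 0 < α₂) (hα₂1 : α₂ < 1)
    (hlam₂0 : 0 ≤ lam₂) (hlam₂α : lam₂ ≤ α₂) (hlam₁0 : 0 ≤ lam₁)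
    (C1 : ∀ (μ ν : Measure E), IsProbabilityMeasure μ → IsProbabilityMeasure ν →
      ∀ x y : E, tvDist (twoStepKernel P μ x) (twoStepKernel P ν y) ≤ 2 * (1 - α₂))
    (C2 : ∀ (μ ν : Measure E), IsProbabilityMeasure μ → IsProbabilityMeasure ν →
      ∀ x : E, tvDist (twoStepKernel P μ x) (twoStepKernel P ν x) ≤ lam₂ * tvDist μ ν)
    (C3 : ∀ (μ ν : Measure E), IsProbabilityMeasure μ → IsProbabilityMeasure ν →
      ∀ x : E, tvDist (P μ x) (P ν x) ≤ lam₁ * tvDist μ ν)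
    (μ0 : Measure E) (hμ0 : IsProbabilityMeasure μ0) :
    (∀ ε : ℝ, 0 < ε → ∃ N : ℕ, ∀ m ≥ N, ∀ n ≥ N,
        tvDist (marginal P μ0 m) (marginal P μ0 n) < ε) ∧
      ∃ π : Measure E, IsProbabilityMeasure π ∧
        Filter.Tendsto (fun n => tvDist (marginal P μ0 n) π) Filter.atTop (nhds 0) := by
  have hprob : ∀ n, IsProbabilityMeasure (marginal P μ0 n) := isProb_marginal P hP μ0 hμ0
  -- Cauchy part
  have hC : ∀ ε : ℝ, 0 < ε → ∃ N : ℕ, ∀ m ≥ N, ∀ n ≥ N,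
      tvDist (marginal P μ0 m) (marginal P μ0 n) < ε := by
    intro ε hε
    obtain ⟨K, hK⟩ := exists_nat_gt ((2 / ε) / α₂)
    refine ⟨2 * K, fun m hm' n hn' => ?_⟩
    have hk : K ≤ min m n / 2 := by omega
    have hden : (0:ℝ) < 1 + α₂ * K :=
      by positivity
    have hdenk : (0:ℝ) < 1 + α₂ * ((min m n / 2 : ℕ) : ℝ) := by positivity
    have h1 := cauchy_marg P hP α₂ lam₂ hα₂0 hα₂1 hlam₂0 hlam₂α C1 C2 μ0 hμ0 m n
    have h2 : 2 / (1 + α₂ * ((min m n / 2 : ℕ):ℝ)) ≤ 2 / (1 + α₂ * K) := by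
      apply div_le_div_of_nonneg_left (by norm_num) hden
      have hcast : (K:ℝ) ≤ ((min m n / 2 : ℕ):ℝ) := Nat.cast_le.mpr hk
      nlinarith
    have h3 : 2 / (1 + α₂ * K) < ε := by
      rw [div_lt_iff₀ hden]
      have h4 : 2 / ε < (K:ℝ) * α₂ := (div_lt_iff₀ hα₂0).mp hK
      have h5 : ε * (2 / ε) = 2 := by field_simp
      nlinarith
    linarith
  refine ⟨hC, ?_⟩
  -- existence of setwise limits
  have hexists : ∀ s : Set E, MeasurableSet s →
      ∃ Ls : ℝ, Tendsto (fun n => ((marginal P μ0 n) s).toReal) atTop (nhds Ls) := by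
    intro s hs
    apply cauchySeq_tendsto_of_complete
    rw [Metric.cauchySeq_iff]
    intro ε hε
    obtain ⟨N, hN⟩ := hC ε hε
    refine ⟨N, fun m hm' n hn' => ?_⟩
    haveI := hprob m; haveI := hprob n
    have h3 := abs_le_half_tvDist (marginal P μ0 m) (marginal P μ0 n) hs
    have h2 := hN m hm' n hn'
    have h6 := tvDist_nonneg (marginal P μ0 m) (marginal P μ0 n)
    rw [Real.dist_eq]
    linarith
  choose L hL using hexists
  have hL0 : ∀ s (hs : MeasurableSet s), 0 ≤ L s hs := fun s hs =>
    ge_of_tendsto (hL s hs) (Filter.Eventually.of_forall fun n => ENNReal.toReal_nonneg)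
  -- countable additivity data
  have hadd : ∀ (f : ℕ → Set E) (hfm : ∀ i, MeasurableSet (f i)),
      Pairwise (Function.onFun Disjoint f) →
      HasSum (fun i => L (f i) (hfm i)) (L (⋃ i, f i) (MeasurableSet.iUnion hfm)) := by
    intro f hfm hfd
    set U := ⋃ i, f i with hUdef
    have hU : MeasurableSet U := MeasurableSet.iUnion hfm
    set T : ℕ → Set E := fun N => ⋃ i, f (N + i) with hT
    have hTm : ∀ N, MeasurableSet (T N) := fun N => MeasurableSet.iUnion fun i => hfm _
    have hTanti : Antitone T := by
      intro a b hab x hx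
      simp only [hT, Set.mem_iUnion] at hx ⊢
      obtain ⟨i, hi⟩ := hx
      exact ⟨b - a + i, by rwa [show a + (b - a + i) = b + i by omega]⟩
    have hTint : ⋂ N, T N = ∅ := by
      ext x
      simp only [Set.mem_iInter, Set.mem_empty_iff_false, iff_false]
      intro hx
      obtain ⟨i, hi⟩ := Set.mem_iUnion.mp (by simpa [hT] using hx 0)
      obtain ⟨j, hj⟩ := Set.mem_iUnion.mp (hx (i + 1))
      exact Set.disjoint_left.mp (hfd (show i ≠ i + 1 + j by omega)) hi hj
    have hsplit : ∀ (n N : ℕ),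
        ((marginal P μ0 n) U).toReal =
          (∑ i ∈ Finset.range N, ((marginal P μ0 n) (f i)).toReal) +
            ((marginal P μ0 n) (T N)).toReal := by
      intro n N
      haveI := hprob n
      set μ := marginal P μ0 n
      have hUeq : U = (⋃ i ∈ Finset.range N, f i) ∪ T N := by
        ext x
        simp only [hUdef, hT, Set.mem_iUnion, Set.mem_union, Finset.mem_range]
        constructor
        · rintro ⟨i, hi⟩
          by_cases h : i < N
          · exact Or.inl ⟨i, h, hi⟩
          · exact Or.inr ⟨i - N, by rwa [show N + (i - N) = i by omega]⟩
        · rintro (⟨i, _, hi⟩ | ⟨i, hi⟩) <;> exact ⟨_, hi⟩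
      have hdisj : Disjoint (⋃ i ∈ Finset.range N, f i) (T N) := by
        rw [Set.disjoint_left]
        rintro x hx hx'
        simp only [Set.mem_iUnion, Finset.mem_range] at hx
        obtain ⟨i, hiN, hxi⟩ := hx
        obtain ⟨j, hj⟩ := Set.mem_iUnion.mp hx'
        exact Set.disjoint_left.mp (hfd (show i ≠ N + j by omega)) hxi hj
      have hmeq : μ U = μ (⋃ i ∈ Finset.range N, f i) + μ (T N) := by
        rw [hUeq, measure_union hdisj (hTm N)]
      rw [hmeq, ENNReal.toReal_add (measure_ne_top _ _) (measure_ne_top _ _)]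
      congr 1
      rw [measure_biUnion_finset (fun i _ j _ hij => hfd hij) (fun i _ => hfm i),
        ENNReal.toReal_sum (fun i _ => measure_ne_top _ _)]
    have hfinL : ∀ N, L U hU =
        (∑ i ∈ Finset.range N, L (f i) (hfm i)) + L (T N) (hTm N) := by
      intro N
      refine tendsto_nhds_unique (hL U hU) ?_
      have h1 : Tendsto (fun n => (∑ i ∈ Finset.range N, ((marginal P μ0 n) (f i)).toReal)
          + ((marginal P μ0 n) (T N)).toReal) atTop
          (nhds ((∑ i ∈ Finset.range N, L (f i) (hfm i)) + L (T N) (hTm N))) :=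
        (tendsto_finset_sum _ fun i _ => hL (f i) (hfm i)).add (hL (T N) (hTm N))
      exact h1.congr fun n => (hsplit n N).symm
    have htail : Tendsto (fun N => L (T N) (hTm N)) atTop (nhds 0) := by
      rw [Metric.tendsto_atTop]
      intro ε hε
      obtain ⟨n₀, hn₀⟩ := hC (ε/2) (by linarith)
      have hb : ∀ N, L (T N) (hTm N) ≤ ((marginal P μ0 n₀) (T N)).toReal + ε/4 := by
        intro N
        refine le_of_tendsto (hL (T N) (hTm N)) ?_
        filter_upwards [Filter.eventually_ge_atTop n₀] with n hn
        haveI := hprob n; haveI := hprob n₀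
        have h2 := hn₀ n hn n₀ le_rfl
        have h3 := abs_le_half_tvDist (marginal P μ0 n) (marginal P μ0 n₀) (hTm N)
        rw [abs_le] at h3
        linarith [h3.1, h3.2]
      have h0 : Tendsto (fun N => ((marginal P μ0 n₀) (T N)).toReal) atTop (nhds 0) := by
        have h1 : Tendsto (fun N => (marginal P μ0 n₀) (T N)) atTop (nhds 0) := by
          have h2 := tendsto_measure_iInter_atTop (μ := marginal P μ0 n₀)
            (fun N => (hTm N).nullMeasurableSet) hTanti ⟨0, measure_ne_top _ _⟩
          rw [hTint, measure_empty] at h2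
          exact h2
        have h3 := (ENNReal.tendsto_toReal ENNReal.zero_ne_top).comp h1
        exact h3
      rw [Metric.tendsto_atTop] at h0
      obtain ⟨N₀, hN₀⟩ := h0 (ε/8) (by linarith)
      refine ⟨N₀, fun N hN => ?_⟩
      have h4 := hN₀ N hN
      rw [Real.dist_eq, sub_zero] at h4 ⊢
      have h5 : 0 ≤ L (T N) (hTm N) := hL0 _ _
      have h6 : 0 ≤ ((marginal P μ0 n₀) (T N)).toReal := ENNReal.toReal_nonneg
      rw [abs_of_nonneg h6] at h4
      rw [abs_of_nonneg h5]
      have h7 := hb N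
      linarith
    have hps : Tendsto (fun N => ∑ i ∈ Finset.range N, L (f i) (hfm i)) atTop
        (nhds (L U hU)) := by
      have h1 : Tendsto (fun N => L U hU - L (T N) (hTm N)) atTop (nhds (L U hU - 0)) :=
        tendsto_const_nhds.sub htail
      rw [sub_zero] at h1
      refine h1.congr fun N => ?_
      have h2 := hfinL N
      linarith
    exact (hasSum_iff_tendsto_nat_of_nonneg (fun i => hL0 _ _) _).mpr hps
  -- construct the limit measure
  have hLempty : L ∅ MeasurableSet.empty = 0 := by
    refine tendsto_nhds_unique (hL ∅ MeasurableSet.empty) ?_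
    have : (fun n => ((marginal P μ0 n) ∅).toReal) = fun _ : ℕ => (0:ℝ) := by
      funext n; simp
    rw [this]
    exact tendsto_const_nhds
  set π : Measure E := Measure.ofMeasurable (fun s hs => ENNReal.ofReal (L s hs))
    (by
      show ENNReal.ofReal (L ∅ MeasurableSet.empty) = 0
      rw [hLempty]; simp)
    (by
      intro f hfm hfd
      have hs := hadd f hfm hfd
      show ENNReal.ofReal (L (⋃ i, f i) (MeasurableSet.iUnion hfm)) =
        ∑' i, ENNReal.ofReal (L (f i) (hfm i))
      rw [← hs.tsum_eq, ENNReal.ofReal_tsum_of_nonneg (fun i => hL0 _ _) hs.summable]) with hπ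
  have hπs : ∀ (s : Set E) (hs : MeasurableSet s), π s = ENNReal.ofReal (L s hs) := by
    intro s hs
    rw [hπ]
    exact Measure.ofMeasurable_apply s hs
  have hπreal : ∀ (s : Set E) (hs : MeasurableSet s), (π s).toReal = L s hs := by
    intro s hs
    rw [hπs s hs, ENNReal.toReal_ofReal (hL0 s hs)]
  have hLuniv : L Set.univ MeasurableSet.univ = 1 := by
    refine tendsto_nhds_unique (hL Set.univ MeasurableSet.univ) ?_
    have : (fun n => ((marginal P μ0 n) Set.univ).toReal) = fun _ : ℕ => (1:ℝ) := by
      funext n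
      haveI := hprob n
      simp
    rw [this]
    exact tendsto_const_nhds
  have hπprob : IsProbabilityMeasure π := by
    constructor
    rw [hπs Set.univ MeasurableSet.univ, hLuniv]
    simp
  refine ⟨π, hπprob, ?_⟩
  rw [Metric.tendsto_atTop]
  intro ε hε
  obtain ⟨N, hN⟩ := hC (ε/4) (by linarith)
  refine ⟨N, fun n hn => ?_⟩
  have key : ∀ s : Set E, MeasurableSet s →
      |((marginal P μ0 n) s).toReal - (π s).toReal| ≤ ε/4 := by
    intro s hs
    rw [hπreal s hs]
    have h1 : Tendsto (fun m => |((marginal P μ0 n) s).toReal -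
        ((marginal P μ0 m) s).toReal|) atTop
        (nhds |((marginal P μ0 n) s).toReal - L s hs|) :=
      (tendsto_const_nhds.sub (hL s hs)).abs
    refine le_of_tendsto h1 ?_
    filter_upwards [Filter.eventually_ge_atTop N] with m hm'
    haveI := hprob n; haveI := hprob m
    have h2 := hN n hn m hm'
    have h3 := abs_le_half_tvDist (marginal P μ0 n) (marginal P μ0 m) hs
    linarith
  have h5 := tvDist_le' (K := ε/4) (by linarith) key
  have h6 := tvDist_nonneg (marginal P μ0 n) π
  rw [Real.dist_eq, sub_zero, abs_of_nonneg h6]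
  linarith
end
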